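/- Let b > 0 be a fixed real number. Then, as c → ∞, the quantity (1/4)·∫_0^b (1/cosh(λ)) · log((sinh(b) + tanh(c)·sinh(λ))/(sinh(b) − tanh(c)·sinh(λ))) dλ tends to (1/4)·∫_0^b (1/cosh(λ)) · log((sinh(b) + sinh(λ))/(sinh(b) − sinh(λ))) dλ, and the limiting integral is finite. -/

import Mathlib

open Real Filter MeasureTheory intervalIntegral Set

lemma myLog_II {b : ℝ} (hb : 0 < b) : IntervalIntegrable Real.log volume 0 b := by
  have hbound : IntervalIntegrable (fun x : ℝ => |Real.log b| + 2 * x ^ (-(1/2) : ℝ))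
      volume 0 b :=
    intervalIntegrable_const.add
      ((intervalIntegral.intervalIntegrable_rpow' (by norm_num)).const_mul 2)
  refine hbound.mono_fun' Real.measurable_log.aestronglyMeasurable ?_
  filter_upwards [ae_restrict_mem measurableSet_uIoc] with x hx
  rw [uIoc_of_le hb.le] at hx
  obtain ⟨hx0, hxb⟩ := hx
  have hrp : 0 < x ^ (-(1/2) : ℝ) := Real.rpow_pos_of_pos hx0 _
  rcases le_or_gt 1 x with h1 | h1
  · have : Real.log x ≤ Real.log b := Real.log_le_log hx0 hxb
    have h0 : 0 ≤ Real.log x := Real.log_nonneg h1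
    have : |Real.log x| ≤ |Real.log b| := by
      rw [abs_of_nonneg h0]; exact le_trans this (le_abs_self _)
    simp only [Real.norm_eq_abs]
    linarith
  · have h0 : Real.log x < 0 := Real.log_neg hx0 h1
    have key : -Real.log x ≤ 2 * x ^ (-(1/2) : ℝ) := by
      have h2 : Real.log (x ^ (-(1/2) : ℝ)) = -(1/2) * Real.log x := Real.log_rpow hx0 _
      have h3 : Real.log (x ^ (-(1/2) : ℝ)) ≤ x ^ (-(1/2) : ℝ) - 1 :=
        Real.log_le_sub_one_of_pos hrp
      linarith
    simp only [Real.norm_eq_abs, abs_of_neg h0]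
    linarith [abs_nonneg (Real.log b)]

lemma mySinh_sub_ge {x y : ℝ} (h : y ≤ x) : x - y ≤ Real.sinh x - Real.sinh y := by
  have := Real.sinh_sub_id_strictMono.monotone h
  linarith

lemma myKeyBound {b t l : ℝ} (hb : 0 < b) (ht0 : 0 ≤ t) (ht1 : t ≤ 1)
    (hl0 : 0 ≤ l) (hlb : l < b) :
    ‖(1 / Real.cosh l) *
        Real.log ((Real.sinh b + t * Real.sinh l) / (Real.sinh b - t * Real.sinh l))‖
      ≤ Real.log (2 * Real.sinh b) - Real.log (b - l) := by
  have hsl : 0 ≤ Real.sinh l := Real.sinh_nonneg_iff.2 hl0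
  have hts : t * Real.sinh l ≤ Real.sinh l := mul_le_of_le_one_left hsl ht1
  have htn : 0 ≤ t * Real.sinh l := mul_nonneg ht0 hsl
  have hss : Real.sinh l < Real.sinh b := Real.sinh_lt_sinh.2 hlb
  have hsub : b - l ≤ Real.sinh b - Real.sinh l := mySinh_sub_ge hlb.le
  have hblpos : 0 < b - l := sub_pos.2 hlb
  have hden : 0 < Real.sinh b - t * Real.sinh l := by linarith
  have hsbpos : 0 < Real.sinh b := Real.sinh_pos_iff.2 hb
  have hnum : 0 < Real.sinh b + t * Real.sinh l := by linarith
  have hratio1 : 1 ≤ (Real.sinh b + t * Real.sinh l) / (Real.sinh b - t * Real.sinh l) :=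
    (one_le_div hden).2 (by linarith)
  have hlog0 : 0 ≤ Real.log ((Real.sinh b + t * Real.sinh l) / (Real.sinh b - t * Real.sinh l)) :=
    Real.log_nonneg hratio1
  have hratio_le : (Real.sinh b + t * Real.sinh l) / (Real.sinh b - t * Real.sinh l)
      ≤ (2 * Real.sinh b) / (b - l) :=
    div_le_div₀ (by linarith) (by linarith) hblpos (by linarith)
  have hlog_le : Real.log ((Real.sinh b + t * Real.sinh l) / (Real.sinh b - t * Real.sinh l))
      ≤ Real.log (2 * Real.sinh b) - Real.log (b - l) := by
    have := Real.log_le_log (by positivity) hratio_le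
    rwa [Real.log_div (by positivity) hblpos.ne'] at this
  have hc1 : 1 / Real.cosh l ≤ 1 := by
    rw [div_le_one (Real.cosh_pos l)]; exact Real.one_le_cosh l
  have hc0 : 0 < 1 / Real.cosh l := by positivity
  rw [Real.norm_eq_abs, abs_of_nonneg (mul_nonneg hc0.le hlog0)]
  calc (1 / Real.cosh l) * Real.log _ ≤ Real.log _ := mul_le_of_le_one_left hlog0 hc1
    _ ≤ _ := hlog_le

lemma myTanh_lt_one (x : ℝ) : Real.tanh x < 1 := by
  rw [Real.tanh_eq_sinh_div_cosh, div_lt_one (Real.cosh_pos x)]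
  have := Real.cosh_sub_sinh x
  have := Real.exp_pos (-x)
  linarith

lemma myTanh_nonneg {x : ℝ} (hx : 0 ≤ x) : 0 ≤ Real.tanh x := by
  rw [Real.tanh_eq_sinh_div_cosh]
  exact div_nonneg (Real.sinh_nonneg_iff.2 hx) (Real.cosh_pos x).le

lemma myTanh_tendsto : Tendsto Real.tanh atTop (nhds 1) := by
  have heq : ∀ c : ℝ, Real.tanh c = 1 - Real.exp (-c) / Real.cosh c := by
    intro c
    rw [Real.tanh_eq_sinh_div_cosh]
    have h1 := Real.cosh_sub_sinh c
    have h2 := (Real.cosh_pos c).ne'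
    field_simp
    linarith
  have h0 : Tendsto (fun c : ℝ => Real.exp (-c) / Real.cosh c) atTop (nhds 0) := by
    apply squeeze_zero (fun c => by positivity)
      (fun c => div_le_self (Real.exp_pos _).le (Real.one_le_cosh c))
    exact Real.tendsto_exp_neg_atTop_nhds_zero
  have h1 : Tendsto (fun c : ℝ => 1 - Real.exp (-c) / Real.cosh c) atTop (nhds (1 - 0)) :=
    tendsto_const_nhds.sub h0
  rw [sub_zero] at h1
  exact h1.congr fun c => (heq c).symm

/-- Corollary to Theorem 1: letting the edge length `c` of an asymptotic orthosceme
(one ideal vertex) tend to infinity yields the volume of an orthosceme with two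
ideal vertices; the limiting integral is finite (the logarithmic singularity at
`λ = b` is integrable). -/
theorem orthosceme_volume_limit_c (b : ℝ) (hb : 0 < b) :
    Filter.Tendsto
      (fun c : ℝ => (1 / 4) * ∫ l in (0:ℝ)..b,
        (1 / Real.cosh l) *
          Real.log ((Real.sinh b + Real.tanh c * Real.sinh l) /
            (Real.sinh b - Real.tanh c * Real.sinh l)))
      Filter.atTop
      (nhds ((1 / 4) * ∫ l in (0:ℝ)..b,
        (1 / Real.cosh l) *
          Real.log ((Real.sinh b + Real.sinh l) / (Real.sinh b - Real.sinh l)))) ∧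
    IntervalIntegrable
      (fun l : ℝ => (1 / Real.cosh l) *
        Real.log ((Real.sinh b + Real.sinh l) / (Real.sinh b - Real.sinh l)))
      MeasureTheory.volume 0 b := by
  -- measurability of the parametrized integrand
  have meas : ∀ t : ℝ, Measurable (fun l : ℝ => (1 / Real.cosh l) *
      Real.log ((Real.sinh b + t * Real.sinh l) / (Real.sinh b - t * Real.sinh l))) := by
    intro t
    exact (measurable_const.div Real.continuous_cosh.measurable).mul
      (Real.measurable_log.comp
        ((measurable_const.add (measurable_const.mul Real.continuous_sinh.measurable)).div
          (measurable_const.sub (measurable_const.mul Real.continuous_sinh.measurable))))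
  have measf : Measurable (fun l : ℝ => (1 / Real.cosh l) *
      Real.log ((Real.sinh b + Real.sinh l) / (Real.sinh b - Real.sinh l))) := by
    have := meas 1
    simpa only [one_mul] using this
  -- the dominating function
  set bound : ℝ → ℝ := fun l => Real.log (2 * Real.sinh b) - Real.log (b - l) with hbound_def
  have hbound_int : IntervalIntegrable bound volume 0 b := by
    apply IntervalIntegrable.sub intervalIntegrable_const
    have := ((myLog_II hb).comp_sub_left b)
    simpa using this.symm
  -- a.e. x ≠ b on the restricted measure
  have hne0 : ∀ᵐ x : ℝ, x ≠ b := by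
    rw [ae_iff]
    simp only [ne_eq, not_not, Set.setOf_eq_eq_singleton]
    exact Real.volume_singleton
  -- integrability of the limit integrand
  have hII : IntervalIntegrable
      (fun l : ℝ => (1 / Real.cosh l) *
        Real.log ((Real.sinh b + Real.sinh l) / (Real.sinh b - Real.sinh l)))
      MeasureTheory.volume 0 b := by
    refine hbound_int.mono_fun' measf.aestronglyMeasurable ?_
    filter_upwards [ae_restrict_mem measurableSet_uIoc, ae_restrict_of_ae hne0] with x hx hxb
    rw [uIoc_of_le hb.le] at hx
    have := myKeyBound (t := 1) hb zero_le_one le_rfl hx.1.le (lt_of_le_of_ne hx.2 hxb)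
    simpa only [one_mul] using this
  refine ⟨?_, hII⟩
  apply Filter.Tendsto.const_mul
  apply intervalIntegral.tendsto_integral_filter_of_dominated_convergence bound
  · exact Eventually.of_forall fun c => (meas (Real.tanh c)).aestronglyMeasurable
  · filter_upwards [eventually_ge_atTop (0:ℝ)] with c hc
    filter_upwards [hne0] with x hxb hx
    rw [uIoc_of_le hb.le] at hx
    exact myKeyBound hb (myTanh_nonneg hc) (myTanh_lt_one c).le hx.1.le
      (lt_of_le_of_ne hx.2 hxb)
  · exact hbound_int
  · filter_upwards [hne0] with x hxb hx
    rw [uIoc_of_le hb.le] at hx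
    have hxlt : x < b := lt_of_le_of_ne hx.2 hxb
    have hss : Real.sinh x < Real.sinh b := Real.sinh_lt_sinh.2 hxlt
    have hsx : 0 ≤ Real.sinh x := Real.sinh_nonneg_iff.2 hx.1.le
    have hsb : 0 < Real.sinh b := Real.sinh_pos_iff.2 hb
    have hden : (0:ℝ) < Real.sinh b - Real.sinh x := by linarith
    have hratio : 0 < (Real.sinh b + Real.sinh x) / (Real.sinh b - Real.sinh x) :=
      div_pos (by linarith) hden
    have hcont : ContinuousAt (fun t : ℝ => (1 / Real.cosh x) *
        Real.log ((Real.sinh b + t * Real.sinh x) / (Real.sinh b - t * Real.sinh x))) 1 := by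
      apply ContinuousAt.mul continuousAt_const
      have hq : ContinuousAt (fun t : ℝ =>
          (Real.sinh b + t * Real.sinh x) / (Real.sinh b - t * Real.sinh x)) 1 := by
        apply ContinuousAt.div
        · fun_prop
        · fun_prop
        · simpa only [one_mul] using hden.ne'
      exact (Real.continuousAt_log (by simpa only [one_mul] using hratio.ne')).comp hq
    have := hcont.tendsto.comp myTanh_tendsto
    simpa only [Function.comp_def, one_mul] using this
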